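/- For every element g ∈ SU(2), the fiber {(A, B) ∈ SU(2) × SU(2) : A*B*A⁻¹*B⁻¹ = g} of the commutator map is nonempty and connected (as a subspace of SU(2) × SU(2)). -/

import Mathlib

/-- `SU(2)`, i.e. `Matrix.specialUnitaryGroup (Fin 2) ℂ`, topologized as a subspace of the
`2 × 2` complex matrices (via the subtype topology). -/
abbrev SU2 := Matrix.specialUnitaryGroup (Fin 2) ℂ

/-- The group structure on `SU(2)` (inverse given by conjugate transpose). -/
noncomputable instance : Group SU2 :=
  { (inferInstance : Monoid SU2) with
    inv := fun A => ⟨star A.1, by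
      refine ⟨⟨?_, ?_⟩, ?_⟩
      · rw [star_star]; exact A.2.1.2
      · rw [star_star]; exact A.2.1.1
      · show Matrix.det (star A.1) = 1
        rw [Matrix.star_eq_conjTranspose, Matrix.det_conjTranspose]
        have h : Matrix.det A.1 = 1 := A.2.2
        rw [h, star_one]⟩
    inv_mul_cancel := fun A => Subtype.ext A.2.1.1 }

/-- The commutator `[a, b] = a * b * a⁻¹ * b⁻¹`. -/
def brk {G : Type*} [Group G] (a b : G) : G := a * b * a⁻¹ * b⁻¹

open Matrix Set
open scoped Quaternion
noncomputable section

open Matrix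
noncomputable section
open scoped Quaternion

def fM : ℍ[ℝ] →ₗ[ℝ] Matrix (Fin 2) (Fin 2) ℂ where
  toFun q := !![⟨q.re, q.imI⟩, ⟨q.imJ, q.imK⟩; ⟨-q.imJ, q.imK⟩, ⟨q.re, -q.imI⟩]
  map_add' x y := by
    ext i j
    fin_cases i <;> fin_cases j <;> simp [Complex.ext_iff] <;> ring
  map_smul' r x := by
    ext i j
    fin_cases i <;> fin_cases j <;> simp [Complex.ext_iff]

theorem fM_mul (x y : ℍ[ℝ]) : fM (x * y) = fM x * fM y := by
  ext i j
  fin_cases i <;> fin_cases j <;>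
    simp [fM, Matrix.mul_apply, Fin.sum_univ_two, Complex.ext_iff, Quaternion.re_mul,
      Quaternion.imI_mul, Quaternion.imJ_mul, Quaternion.imK_mul] <;> exact ⟨by ring, by ring⟩

theorem fM_one : fM 1 = 1 := by
  ext i j
  fin_cases i <;> fin_cases j <;> simp [fM, Complex.ext_iff, Matrix.one_apply]

theorem fM_star (x : ℍ[ℝ]) : fM (star x) = star (fM x) := by
  ext i j
  fin_cases i <;> fin_cases j <;>
    simp [fM, Complex.ext_iff, Matrix.star_apply, Quaternion.re_star,
      Quaternion.imI_star, Quaternion.imJ_star, Quaternion.imK_star]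

theorem fM_det (x : ℍ[ℝ]) : (fM x).det = Quaternion.normSq x := by
  simp [fM, Matrix.det_fin_two, Complex.ext_iff, Quaternion.normSq_def']
  simp [← Complex.ofReal_pow]
  constructor <;> ring

theorem normSq_of_norm_one {a : ℍ[ℝ]} (h : ‖a‖ = 1) : Quaternion.normSq a = 1 := by
  rw [Quaternion.normSq_eq_norm_mul_self, h, mul_one]

theorem star_mul_self_of_norm_one {a : ℍ[ℝ]} (h : ‖a‖ = 1) : star a * a = 1 := by
  rw [Quaternion.star_mul_self, normSq_of_norm_one h]; exact_mod_cast rfl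

theorem mul_star_self_of_norm_one {a : ℍ[ℝ]} (h : ‖a‖ = 1) : a * star a = 1 := by
  rw [Quaternion.self_mul_star, normSq_of_norm_one h]; exact_mod_cast rfl

theorem fM_mem {a : ℍ[ℝ]} (h : ‖a‖ = 1) : fM a ∈ Matrix.specialUnitaryGroup (Fin 2) ℂ := by
  rw [Matrix.mem_specialUnitaryGroup_iff]
  refine ⟨Matrix.mem_unitaryGroup_iff.mpr ?_, ?_⟩
  · rw [← fM_star, ← fM_mul, mul_star_self_of_norm_one h, fM_one]
  · rw [fM_det, normSq_of_norm_one h]; exact_mod_cast rfl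

theorem fM_inj : Function.Injective fM := by
  intro x y h
  have h00 := congrFun (congrFun h 0) 0
  have h10 := congrFun (congrFun h 1) 0
  simp [fM, Complex.ext_iff] at h00 h10
  ext <;> tauto

theorem fM_surj {A : Matrix (Fin 2) (Fin 2) ℂ} (hA : A ∈ Matrix.specialUnitaryGroup (Fin 2) ℂ) :
    ∃ a : ℍ[ℝ], ‖a‖ = 1 ∧ fM a = A := by
  obtain ⟨hu, hd⟩ := Matrix.mem_specialUnitaryGroup_iff.mp hA
  have hsA : star A * A = 1 := Matrix.mem_unitaryGroup_iff'.mp hu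
  have hadj : A * A.adjugate = 1 := by
    rw [Matrix.mul_adjugate, hd, one_smul]
  have hstar : star A = A.adjugate := by
    calc star A = star A * (A * A.adjugate) := by rw [hadj, mul_one]
    _ = (star A * A) * A.adjugate := by rw [mul_assoc]
    _ = A.adjugate := by rw [hsA, one_mul]
  have e1 : A 1 1 = starRingEnd ℂ (A 0 0) := by
    have := congrFun (congrFun hstar 0) 0
    rw [Matrix.adjugate_fin_two] at this
    simpa [Matrix.star_apply] using this.symm
  have e2 : A 0 1 = -starRingEnd ℂ (A 1 0) := by
    have := congrFun (congrFun hstar 0) 1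
    rw [Matrix.adjugate_fin_two] at this
    simp [Matrix.star_apply] at this
    rw [this]; ring
  set a : ℍ[ℝ] := (⟨(A 0 0).re, (A 0 0).im, -(A 1 0).re, (A 1 0).im⟩ : ℍ[ℝ]) with ha
  have hfa : fM a = A := by
    ext i j
    fin_cases i <;> fin_cases j <;>
      simp [fM, ha, Complex.ext_iff, e1, e2, Complex.conj_re, Complex.conj_im]
  refine ⟨a, ?_, hfa⟩
  have hdet : (fM a).det = 1 := by rw [hfa, hd]
  rw [fM_det] at hdet
  have h2 : Quaternion.normSq a = 1 := by exact_mod_cast hdet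
  rw [Quaternion.normSq_eq_norm_mul_self] at h2
  nlinarith [norm_nonneg a]



theorem exists_unit_solution {p q u : ℍ[ℝ]} (hu : u ≠ 0) (h : u * p = q * u) :
    ∃ v : ℍ[ℝ], ‖v‖ = 1 ∧ v * p = q * v := by
  refine ⟨‖u‖⁻¹ • u, ?_, ?_⟩
  · rw [norm_smul, norm_inv, norm_norm, inv_mul_cancel₀ (norm_ne_zero_iff.mpr hu)]
  · rw [smul_mul_assoc, h, mul_smul_comm]

theorem normSq_of_norm_one' {a : ℍ[ℝ]} (h : ‖a‖ = 1) : Quaternion.normSq a = 1 := by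
  rw [Quaternion.normSq_eq_norm_mul_self, h, mul_one]

theorem conj_of_same_re {p q : ℍ[ℝ]} (hp : ‖p‖ = 1) (hq : ‖q‖ = 1) (hre : p.re = q.re) :
    ∃ u : ℍ[ℝ], ‖u‖ = 1 ∧ u * p = q * u := by
  have np := normSq_of_norm_one' hp
  have nq := normSq_of_norm_one' hq
  rw [Quaternion.normSq_def'] at np nq
  have h : p.imI^2 + p.imJ^2 + p.imK^2 = q.imI^2 + q.imJ^2 + q.imK^2 := by
    linear_combination np - nq - (p.re + q.re) * hre
  by_cases hc : p.imI + q.imI = 0 ∧ p.imJ + q.imJ = 0 ∧ p.imK + q.imK = 0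
  · obtain ⟨c1, c2, c3⟩ := hc
    have e1 : q.imI = -p.imI := by linarith
    have e2 : q.imJ = -p.imJ := by linarith
    have e3 : q.imK = -p.imK := by linarith
    by_cases hz : p.imI = 0 ∧ p.imJ = 0 ∧ p.imK = 0
    · refine ⟨1, norm_one, ?_⟩
      rw [one_mul, mul_one]
      ext <;> simp [hre, e1, e2, e3, hz.1, hz.2.1, hz.2.2]
    · by_cases hxy : p.imI = 0 ∧ p.imJ = 0
      · refine exists_unit_solution (u := (show ℍ[ℝ] from ⟨0,1,0,0⟩)) ?_ ?_
        · intro h0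
          have := congrArg QuaternionAlgebra.imI h0
          simp at this
        · ext <;>
            simp -zeta only [Quaternion.re_mul, Quaternion.imI_mul, Quaternion.imJ_mul,
              Quaternion.imK_mul, e1, e2, e3, hxy.1, hxy.2, ← hre] <;> simp [hxy.1, hxy.2, ← hre, e1, e2, e3]
      · refine exists_unit_solution (u := (show ℍ[ℝ] from ⟨0, p.imJ, -p.imI, 0⟩)) ?_ ?_
        · intro h0
          have h1 := congrArg QuaternionAlgebra.imI h0
          have h2 := congrArg QuaternionAlgebra.imJ h0
          simp at h1 h2
          exact hxy ⟨h2, h1⟩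
        · ext <;>
            simp -zeta only [Quaternion.re_mul, Quaternion.imI_mul, Quaternion.imJ_mul,
              Quaternion.imK_mul, e1, e2, e3, ← hre] <;> ring
  · refine exists_unit_solution
      (u := (show ℍ[ℝ] from ⟨p.imI^2 + p.imJ^2 + p.imK^2 + (q.imI * p.imI + q.imJ * p.imJ + q.imK * p.imK),
        p.imI + q.imI - (q.imJ * p.imK - q.imK * p.imJ),
        p.imJ + q.imJ - (q.imK * p.imI - q.imI * p.imK),
        p.imK + q.imK - (q.imI * p.imJ - q.imJ * p.imI)⟩)) ?_ ?_
    · intro h0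
      have h0re := congrArg QuaternionAlgebra.re h0
      simp only [Quaternion.re_zero] at h0re
      have hre2 : (p.imI + q.imI)^2 + (p.imJ + q.imJ)^2 + (p.imK + q.imK)^2 = 0 := by
        linear_combination 2 * h0re - h
      have z1 : (p.imI + q.imI)^2 = 0 := by
        nlinarith [sq_nonneg (p.imI + q.imI), sq_nonneg (p.imJ + q.imJ), sq_nonneg (p.imK + q.imK)]
      have z2 : (p.imJ + q.imJ)^2 = 0 := by
        nlinarith [sq_nonneg (p.imI + q.imI), sq_nonneg (p.imJ + q.imJ), sq_nonneg (p.imK + q.imK)]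
      have z3 : (p.imK + q.imK)^2 = 0 := by
        nlinarith [sq_nonneg (p.imI + q.imI), sq_nonneg (p.imJ + q.imJ), sq_nonneg (p.imK + q.imK)]
      exact hc ⟨pow_eq_zero_iff two_ne_zero |>.mp z1, pow_eq_zero_iff two_ne_zero |>.mp z2,
        pow_eq_zero_iff two_ne_zero |>.mp z3⟩
    · apply Quaternion.ext <;>
        simp -zeta only [Quaternion.re_mul, Quaternion.imI_mul, Quaternion.imJ_mul, Quaternion.imK_mul]
      · linear_combination (-1 : ℝ) * h
          + (p.imI^2 + p.imJ^2 + p.imK^2 + (q.imI * p.imI + q.imJ * p.imJ + q.imK * p.imK)) * hre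
      · linear_combination p.imI * h
          + (p.imI + q.imI - (q.imJ * p.imK - q.imK * p.imJ)) * hre
      · linear_combination p.imJ * h
          + (p.imJ + q.imJ - (q.imK * p.imI - q.imI * p.imK)) * hre
      · linear_combination p.imK * h
          + (p.imK + q.imK - (q.imI * p.imJ - q.imJ * p.imI)) * hre


instance : FiniteDimensional ℝ ℍ[ℝ] := by
  infer_instance

/-- unit vectors of a submodule of dimension ≥ 2 form a connected set -/
theorem isConnected_sphere_submodule (W : Submodule ℝ ℍ[ℝ]) (hW : 2 ≤ Module.finrank ℝ W) :
    IsConnected {x : ℍ[ℝ] | ‖x‖ = 1 ∧ x ∈ W} := by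
  have hrank : 1 < Module.rank ℝ W := by
    rw [← Module.finrank_eq_rank]
    exact_mod_cast Nat.lt_of_lt_of_le Nat.one_lt_two hW
  have hconn : IsConnected (Metric.sphere (0 : W) 1) := isConnected_sphere hrank 0 zero_le_one
  have himage := hconn.image Subtype.val continuous_subtype_val.continuousOn
  convert himage using 1
  ext x
  constructor
  · rintro ⟨hn, hx⟩
    refine ⟨⟨x, hx⟩, ?_, rfl⟩
    simp [Submodule.coe_norm, hn]
  · rintro ⟨⟨w, hw⟩, hmem, rfl⟩
    simp only [Metric.mem_sphere, dist_zero_right, Submodule.coe_norm] at hmem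
    exact ⟨hmem, hw⟩

/-- kernels of functionals are large -/
theorem finrank_ker_ge (ℓ : ℍ[ℝ] →ₗ[ℝ] ℝ) : 3 ≤ Module.finrank ℝ (LinearMap.ker ℓ) := by
  have h := LinearMap.finrank_range_add_finrank_ker ℓ
  rw [Quaternion.finrank_eq_four] at h
  have h2 : Module.finrank ℝ (LinearMap.range ℓ) ≤ 1 := by
    simpa using Submodule.finrank_le (LinearMap.range ℓ)
  omega

theorem finrank_ker_ge2 (ℓ : ℍ[ℝ] →ₗ[ℝ] (ℝ × ℝ)) :
    2 ≤ Module.finrank ℝ (LinearMap.ker ℓ) := by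
  have h := LinearMap.finrank_range_add_finrank_ker ℓ
  rw [Quaternion.finrank_eq_four] at h
  have h2 : Module.finrank ℝ (LinearMap.range ℓ) ≤ 2 := by
    have := Submodule.finrank_le (LinearMap.range ℓ)
    simpa using this
  omega

/-- Gluing: a continuous surjection from a compact space onto a preconnected T2 space
with preconnected fibers has preconnected total space. -/
theorem preconnectedSpace_of_fibers {X Y : Type*} [TopologicalSpace X] [TopologicalSpace Y]
    [CompactSpace X] [T2Space Y] [PreconnectedSpace Y] {f : X → Y} (hf : Continuous f)
    (hsurj : Function.Surjective f) (hfib : ∀ y, IsPreconnected (f ⁻¹' {y})) :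
    PreconnectedSpace X := by
  apply preconnectedSpace_of_forall_constant
  intro h hc x y
  have hTcl : IsClosed (h ⁻¹' {true}) := (isClosed_singleton).preimage hc
  have hFcl : IsClosed (h ⁻¹' {false}) := (isClosed_singleton).preimage hc
  have hTclopen : IsClopen (h ⁻¹' {true}) := ⟨hTcl, (isOpen_discrete _).preimage hc⟩
  have hFclopen : IsClopen (h ⁻¹' {false}) := ⟨hFcl, (isOpen_discrete _).preimage hc⟩
  have hTim : IsClosed (f '' (h ⁻¹' {true})) := (hTcl.isCompact.image hf).isClosed
  have hFim : IsClosed (f '' (h ⁻¹' {false})) := (hFcl.isCompact.image hf).isClosed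
  have hdisj : f '' (h ⁻¹' {true}) ∩ f '' (h ⁻¹' {false}) = ∅ := by
    ext z
    simp only [mem_inter_iff, mem_image, mem_empty_iff_false, iff_false]
    rintro ⟨⟨x1, hx1, rfl⟩, ⟨x2, hx2, hfx2⟩⟩
    have hsub : f ⁻¹' {f x1} ⊆ h ⁻¹' {true} :=
      (hfib (f x1)).subset_isClopen hTclopen ⟨x1, rfl, hx1⟩
    have : h x2 = true := hsub (show f x2 ∈ ({f x1} : Set Y) from hfx2)
    simp only [mem_preimage, mem_singleton_iff] at this hx2
    rw [this] at hx2
    exact Bool.noConfusion hx2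
  have hcover : f '' (h ⁻¹' {true}) ∪ f '' (h ⁻¹' {false}) = univ := by
    ext z
    simp only [mem_union, mem_image, mem_univ, iff_true]
    obtain ⟨x0, rfl⟩ := hsurj z
    cases hb : h x0
    · exact Or.inr ⟨x0, by simp [hb], rfl⟩
    · exact Or.inl ⟨x0, by simp [hb], rfl⟩
  have hTopen : IsOpen (f '' (h ⁻¹' {true})) := by
    have : f '' (h ⁻¹' {true}) = (f '' (h ⁻¹' {false}))ᶜ := by
      apply Subset.antisymm
      · intro z hz hz'
        exact absurd (mem_inter hz hz') (by rw [hdisj]; exact notMem_empty z)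
      · intro z hz
        rcases (hcover ▸ mem_univ z : z ∈ _) with h1 | h1
        · exact h1
        · exact absurd h1 hz
    rw [this]
    exact hFim.isOpen_compl
  rcases isClopen_iff.mp ⟨hTim, hTopen⟩ with hT | hT
  · -- image of trues empty : everything false
    have hfalse : ∀ z : X, h z = false := by
      intro z
      cases hb : h z
      · rfl
      · exfalso
        have : f z ∈ f '' (h ⁻¹' {true}) := ⟨z, by simp [hb], rfl⟩
        rw [hT] at this
        exact notMem_empty _ this
    rw [hfalse x, hfalse y]
  · -- image of trues is everything : everything true
    have htrue : ∀ z : X, h z = true := by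
      intro z
      have : f z ∈ f '' (h ⁻¹' {true}) := by rw [hT]; exact mem_univ _
      obtain ⟨x1, hx1, hfx1⟩ := this
      have hsub : f ⁻¹' {f x1} ⊆ h ⁻¹' {true} :=
        (hfib (f x1)).subset_isClopen hTclopen ⟨x1, rfl, hx1⟩
      have := hsub (show f z ∈ ({f x1} : Set Y) from hfx1.symm)
      simpa using this
    rw [htrue x, htrue y]

/-- re as a linear map -/
def reL : ℍ[ℝ] →ₗ[ℝ] ℝ where
  toFun := QuaternionAlgebra.re
  map_add' x y := by simp
  map_smul' r x := by simp

theorem re_mul_comm (x y : ℍ[ℝ]) : (x * y).re = (y * x).re := by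
  simp only [Quaternion.re_mul]; ring

variable (g : ℍ[ℝ])

/-- the commutator fiber, in the form a*b = g*b*a -/
def Fq : Set (ℍ[ℝ] × ℍ[ℝ]) :=
  {p | ‖p.1‖ = 1 ∧ ‖p.2‖ = 1 ∧ p.1 * p.2 = g * p.2 * p.1}

/-- the base: second components of the fiber -/
def Vq : Set ℍ[ℝ] := {b | ‖b‖ = 1 ∧ (g * b).re = b.re}

theorem hVq_eq : Vq g = {x : ℍ[ℝ] | ‖x‖ = 1 ∧
    x ∈ LinearMap.ker (reL ∘ₗ LinearMap.mulLeft ℝ (g - 1))} := by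
  ext x
  simp only [Vq, mem_setOf_eq, LinearMap.mem_ker, LinearMap.coe_comp, Function.comp_apply,
    LinearMap.mulLeft_apply, reL, LinearMap.coe_mk, AddHom.coe_mk, sub_mul, one_mul,
    Quaternion.re_sub, sub_eq_zero]
  exact and_congr_right fun _ => sub_eq_zero.symm

theorem isConnected_Vq (hg : ‖g‖ = 1) : IsConnected (Vq g) := by
  rw [hVq_eq]
  apply isConnected_sphere_submodule
  have := finrank_ker_ge (reL ∘ₗ LinearMap.mulLeft ℝ (g - 1))
  omega

theorem exists_a (hg : ‖g‖ = 1) {b : ℍ[ℝ]} (hb : b ∈ Vq g) :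
    ∃ a : ℍ[ℝ], ‖a‖ = 1 ∧ a * b = g * b * a := by
  obtain ⟨hb1, hb2⟩ := hb
  obtain ⟨u, hu1, hu2⟩ := conj_of_same_re hb1
    (by rw [norm_mul, hg, hb1, mul_one] : ‖g * b‖ = 1) hb2.symm
  exact ⟨u, hu1, by rw [hu2]⟩

theorem isPreconnected_Sb (hg : ‖g‖ = 1) {b : ℍ[ℝ]} (hb1 : ‖b‖ = 1)
    (ha : ∃ a : ℍ[ℝ], ‖a‖ = 1 ∧ a * b = g * b * a) :
    IsPreconnected {a : ℍ[ℝ] | ‖a‖ = 1 ∧ a * b = g * b * a} := by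
  obtain ⟨a₀, ha1, ha2⟩ := ha
  set T : ℍ[ℝ] →ₗ[ℝ] ℍ[ℝ] := LinearMap.mulRight ℝ b - LinearMap.mulLeft ℝ (g * b) with hT
  have hset : {a : ℍ[ℝ] | ‖a‖ = 1 ∧ a * b = g * b * a}
      = {x : ℍ[ℝ] | ‖x‖ = 1 ∧ x ∈ LinearMap.ker T} := by
    ext x
    simp only [mem_setOf_eq, LinearMap.mem_ker, hT, LinearMap.sub_apply,
      LinearMap.mulRight_apply, LinearMap.mulLeft_apply, sub_eq_zero]
  rw [hset]
  apply (isConnected_sphere_submodule _ ?_).isPreconnected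
  have ha₀ne : a₀ ≠ 0 := by
    intro h0; rw [h0, norm_zero] at ha1; norm_num at ha1
  have hbne : b ≠ 0 := by
    intro h0; rw [h0, norm_zero] at hb1; norm_num at hb1
  have hmem₀ : a₀ ∈ LinearMap.ker T := by
    simp only [LinearMap.mem_ker, hT, LinearMap.sub_apply, LinearMap.mulRight_apply,
      LinearMap.mulLeft_apply, sub_eq_zero]
    rw [ha2]
  by_cases hbr : b.imI = 0 ∧ b.imJ = 0 ∧ b.imK = 0
  · -- b is real, so g = 1 and T = 0
    have hbc : b = ((b.re : ℝ) : ℍ[ℝ]) := by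
      ext <;> simp [hbr.1, hbr.2.1, hbr.2.2]
    have hcomm : a₀ * b = b * a₀ := by
      rw [hbc]; exact (Quaternion.coe_commutes b.re a₀).symm
    have hgb : g * b = b := by
      have h3 : (g * b) * a₀ = b * a₀ := by rw [← ha2, hcomm]
      exact mul_right_cancel₀ ha₀ne h3
    have hTzero : LinearMap.ker T = ⊤ := by
      rw [LinearMap.ker_eq_top]
      refine LinearMap.ext fun x => ?_
      simp only [hT, LinearMap.sub_apply, LinearMap.mulRight_apply, LinearMap.mulLeft_apply,
        LinearMap.zero_apply, hgb, sub_eq_zero]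
      rw [hbc]
      exact (Quaternion.coe_commutes b.re x).symm
    rw [hTzero]
    rw [show Module.finrank ℝ (⊤ : Submodule ℝ ℍ[ℝ]) = Module.finrank ℝ ℍ[ℝ] from
      finrank_top ℝ ℍ[ℝ], Quaternion.finrank_eq_four]
    omega
  · -- b is not real; a₀ and a₀ * b are independent elements of ker T
    have hmem₁ : a₀ * b ∈ LinearMap.ker T := by
      simp only [LinearMap.mem_ker, hT, LinearMap.sub_apply, LinearMap.mulRight_apply,
        LinearMap.mulLeft_apply, sub_eq_zero]
      rw [← mul_assoc, ← ha2]
    have hind : LinearIndependent ℝ ![a₀, a₀ * b] := by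
      rw [LinearIndependent.pair_iff]
      intro s t hst
      have h1 : a₀ * ((s : ℍ[ℝ]) + (t : ℍ[ℝ]) * b) = 0 := by
        calc a₀ * ((s : ℍ[ℝ]) + (t : ℍ[ℝ]) * b)
            = a₀ * (s : ℍ[ℝ]) + (a₀ * (t : ℍ[ℝ])) * b := by rw [mul_add, mul_assoc]
          _ = s • a₀ + (t • a₀) * b := by
              rw [Quaternion.mul_coe_eq_smul, Quaternion.mul_coe_eq_smul]
          _ = s • a₀ + t • (a₀ * b) := by rw [smul_mul_assoc]
          _ = 0 := hst
      have h2 : (s : ℍ[ℝ]) + (t : ℍ[ℝ]) * b = 0 := by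
        rcases mul_eq_zero.mp h1 with h | h
        · exact absurd h ha₀ne
        · exact h
      by_cases ht : t = 0
      · refine ⟨?_, ht⟩
        rw [ht] at h2
        simpa using congrArg QuaternionAlgebra.re h2
      · exfalso
        apply hbr
        have e1 := congrArg QuaternionAlgebra.imI h2
        have e2 := congrArg QuaternionAlgebra.imJ h2
        have e3 := congrArg QuaternionAlgebra.imK h2
        simp [Quaternion.imI_mul, Quaternion.imJ_mul, Quaternion.imK_mul] at e1 e2 e3
        refine ⟨?_, ?_, ?_⟩
        · rcases e1 with h | h; exact absurd h ht; exact h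
        · rcases e2 with h | h; exact absurd h ht; exact h
        · rcases e3 with h | h; exact absurd h ht; exact h
    have hspan : Submodule.span ℝ (Set.range ![a₀, a₀ * b]) ≤ LinearMap.ker T := by
      rw [Submodule.span_le]
      intro x hx
      rcases mem_range.mp hx with ⟨i, rfl⟩
      fin_cases i
      · exact hmem₀
      · exact hmem₁
    have hfr : Module.finrank ℝ (Submodule.span ℝ (Set.range ![a₀, a₀ * b])) = 2 := by
      rw [finrank_span_eq_card hind]
      simp
    have := Submodule.finrank_mono hspan
    omega

theorem Fq_nonempty (hg : ‖g‖ = 1) : (Fq g).Nonempty := by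
  set ℓ2 : ℍ[ℝ] →ₗ[ℝ] ℝ × ℝ := reL.prod (reL ∘ₗ LinearMap.mulLeft ℝ g) with hℓ2
  have h2 := finrank_ker_ge2 ℓ2
  have hne : LinearMap.ker ℓ2 ≠ ⊥ := by
    intro hbot
    rw [hbot, finrank_bot] at h2
    omega
  obtain ⟨b', hb'mem, hb'ne⟩ := Submodule.ne_bot_iff _ |>.mp hne
  set b : ℍ[ℝ] := ‖b'‖⁻¹ • b' with hbdef
  have hbnorm : ‖b‖ = 1 := by
    rw [hbdef, norm_smul, norm_inv, norm_norm, inv_mul_cancel₀ (norm_ne_zero_iff.mpr hb'ne)]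
  have hbmem : b ∈ LinearMap.ker ℓ2 := Submodule.smul_mem _ _ hb'mem
  rw [LinearMap.mem_ker, hℓ2] at hbmem
  have hre1 : b.re = 0 := congrArg Prod.fst hbmem
  have hre2 : (g * b).re = 0 := congrArg Prod.snd hbmem
  have hbV : b ∈ Vq g := ⟨hbnorm, by rw [hre1, hre2]⟩
  obtain ⟨a, ha1, ha2⟩ := exists_a g hg hbV
  exact ⟨(a, b), ha1, hbnorm, ha2⟩

theorem isPreconnected_Fq (hg : ‖g‖ = 1) : IsPreconnected (Fq g) := by
  -- compactness
  have hclosed : IsClosed (Fq g) := by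
    have heq : Fq g = {p : ℍ[ℝ] × ℍ[ℝ] | ‖p.1‖ = 1} ∩
        ({p : ℍ[ℝ] × ℍ[ℝ] | ‖p.2‖ = 1} ∩ {p : ℍ[ℝ] × ℍ[ℝ] | p.1 * p.2 = g * p.2 * p.1}) := by
      ext p; simp [Fq, mem_inter_iff, and_assoc]
    rw [heq]
    exact (isClosed_eq continuous_fst.norm continuous_const).inter
      ((isClosed_eq continuous_snd.norm continuous_const).inter
        (isClosed_eq (continuous_fst.mul continuous_snd)
          ((continuous_const.mul continuous_snd).mul continuous_fst)))
  have hcomp : IsCompact (Fq g) := by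
    apply IsCompact.of_isClosed_subset
      ((isCompact_sphere (0 : ℍ[ℝ]) 1).prod (isCompact_sphere (0 : ℍ[ℝ]) 1)) hclosed
    rintro p ⟨h1, h2, _⟩
    exact ⟨mem_sphere_zero_iff_norm.mpr h1, mem_sphere_zero_iff_norm.mpr h2⟩
  haveI : CompactSpace ↥(Fq g) := isCompact_iff_compactSpace.mp hcomp
  haveI : PreconnectedSpace ↥(Vq g) :=
    Subtype.preconnectedSpace (isConnected_Vq g hg).isPreconnected
  -- the projection to the base
  have hmap : ∀ p : ↥(Fq g), (p : ℍ[ℝ] × ℍ[ℝ]).2 ∈ Vq g := by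
    rintro ⟨⟨a, b⟩, ha1, hb1, hab⟩
    have hane : a ≠ 0 := by
      intro h0; rw [h0, norm_zero] at ha1; norm_num at ha1
    refine ⟨hb1, ?_⟩
    have hb : b = a⁻¹ * (g * b * a) := by rw [← hab, inv_mul_cancel_left₀ hane]
    calc (g * b).re = ((g * b) * (a * a⁻¹)).re := by rw [mul_inv_cancel₀ hane, mul_one]
      _ = ((g * b * a) * a⁻¹).re := by rw [mul_assoc (g * b) a a⁻¹]
      _ = (a⁻¹ * (g * b * a)).re := re_mul_comm _ _
      _ = b.re := by rw [← hb]
  set π : ↥(Fq g) → ↥(Vq g) := fun p => ⟨(p : ℍ[ℝ] × ℍ[ℝ]).2, hmap p⟩ with hπ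
  have hπcont : Continuous π :=
    Continuous.subtype_mk (continuous_snd.comp continuous_subtype_val) _
  have hπsurj : Function.Surjective π := by
    rintro ⟨b, hb⟩
    obtain ⟨a, ha1, ha2⟩ := exists_a g hg hb
    exact ⟨⟨(a, b), ha1, hb.1, ha2⟩, rfl⟩
  have hπfib : ∀ y, IsPreconnected (π ⁻¹' {y}) := by
    rintro ⟨b, hb⟩
    haveI : PreconnectedSpace ↥{a : ℍ[ℝ] | ‖a‖ = 1 ∧ a * b = g * b * a} :=
      Subtype.preconnectedSpace (isPreconnected_Sb g hg hb.1 (exists_a g hg hb))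
    set j : ↥{a : ℍ[ℝ] | ‖a‖ = 1 ∧ a * b = g * b * a} → ↥(Fq g) :=
      fun a => ⟨((a : ℍ[ℝ]), b), a.2.1, hb.1, a.2.2⟩ with hj
    have hjcont : Continuous j :=
      Continuous.subtype_mk (continuous_subtype_val.prodMk continuous_const) _
    have hrange : π ⁻¹' {⟨b, hb⟩} = Set.range j := by
      ext p
      simp only [Set.mem_preimage, mem_singleton_iff, Subtype.ext_iff, hπ, Set.mem_range]
      constructor
      · intro hpb
        refine ⟨⟨(p : ℍ[ℝ] × ℍ[ℝ]).1, p.2.1, ?_⟩, ?_⟩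
        · rw [← hpb]; exact p.2.2.2
        · show ((p : ℍ[ℝ] × ℍ[ℝ]).1, b) = (p : ℍ[ℝ] × ℍ[ℝ])
          rw [← hpb]
      · rintro ⟨a, ha⟩
        exact (congrArg Prod.snd ha).symm
    rw [hrange]
    exact isPreconnected_range hjcont
  haveI := preconnectedSpace_of_fibers hπcont hπsurj hπfib
  exact isPreconnected_iff_preconnectedSpace.mpr ‹PreconnectedSpace ↥(Fq g)›


/-- Every fiber of the commutator map `μ : SU(2) × SU(2) → SU(2)`, `(A, B) ↦ [A,B]`,
is nonempty and connected. -/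
theorem commutator_fiber_nonempty_and_connected (g : SU2) :
    ({p : SU2 × SU2 | brk p.1 p.2 = g}).Nonempty ∧
    IsConnected {p : SU2 × SU2 | brk p.1 p.2 = g} := by
  obtain ⟨q, hq, hfq⟩ := fM_surj g.2
  have hfMcont : Continuous fM := fM.continuous_of_finiteDimensional
  -- the transfer map
  set Θ : ↥(Fq q) → SU2 × SU2 := fun p =>
    (⟨fM (p : ℍ[ℝ] × ℍ[ℝ]).1, fM_mem p.2.1⟩, ⟨fM (p : ℍ[ℝ] × ℍ[ℝ]).2, fM_mem p.2.2.1⟩) with hΘ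
  have hΘcont : Continuous Θ :=
    Continuous.prodMk
      (Continuous.subtype_mk (hfMcont.comp (continuous_fst.comp continuous_subtype_val)) _)
      (Continuous.subtype_mk (hfMcont.comp (continuous_snd.comp continuous_subtype_val)) _)
  have brk_coe : ∀ A B : SU2, ((brk A B : SU2) : Matrix (Fin 2) (Fin 2) ℂ)
      = (A : Matrix (Fin 2) (Fin 2) ℂ) * B * star (A : Matrix (Fin 2) (Fin 2) ℂ)
        * star (B : Matrix (Fin 2) (Fin 2) ℂ) := fun A B => rfl
  have hrange : Set.range Θ = {p : SU2 × SU2 | brk p.1 p.2 = g} := by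
    ext p
    constructor
    · rintro ⟨⟨⟨a, b⟩, ha1, hb1, hab⟩, rfl⟩
      have hane : a ≠ 0 := by intro h0; rw [h0, norm_zero] at ha1; norm_num at ha1
      have hbne : b ≠ 0 := by intro h0; rw [h0, norm_zero] at hb1; norm_num at hb1
      have hsa : star a = a⁻¹ := eq_inv_of_mul_eq_one_left (star_mul_self_of_norm_one ha1)
      have hsb : star b = b⁻¹ := eq_inv_of_mul_eq_one_left (star_mul_self_of_norm_one hb1)
      have hquat : a * b * star a * star b = q := by
        rw [hsa, hsb, hab, mul_inv_cancel_right₀ hane, mul_inv_cancel_right₀ hbne]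
      show brk _ _ = g
      apply Subtype.ext
      rw [brk_coe]
      show fM a * fM b * star (fM a) * star (fM b) = (g : Matrix (Fin 2) (Fin 2) ℂ)
      rw [← fM_star, ← fM_star, ← fM_mul, ← fM_mul, ← fM_mul, hquat, hfq]
    · intro hp
      obtain ⟨a, ha1, hfa⟩ := fM_surj p.1.2
      obtain ⟨b, hb1, hfb⟩ := fM_surj p.2.2
      have hane : a ≠ 0 := by intro h0; rw [h0, norm_zero] at ha1; norm_num at ha1
      have hbne : b ≠ 0 := by intro h0; rw [h0, norm_zero] at hb1; norm_num at hb1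
      have hsa : star a = a⁻¹ := eq_inv_of_mul_eq_one_left (star_mul_self_of_norm_one ha1)
      have hsb : star b = b⁻¹ := eq_inv_of_mul_eq_one_left (star_mul_self_of_norm_one hb1)
      have hcoe : fM (a * b * star a * star b) = fM q := by
        rw [fM_mul, fM_mul, fM_mul, fM_star, fM_star, hfa, hfb, hfq]
        have := congrArg (Subtype.val) hp
        rw [brk_coe] at this
        exact this
      have habq : a * b * a⁻¹ * b⁻¹ = q := by
        rw [← hsa, ← hsb]; exact fM_inj hcoe
      have h1 : a * b * a⁻¹ = q * b := by
        calc a * b * a⁻¹ = (a * b * a⁻¹ * b⁻¹) * b := by rw [inv_mul_cancel_right₀ hbne]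
          _ = q * b := by rw [habq]
      have hab : a * b = q * b * a := by
        calc a * b = (a * b * a⁻¹) * a := by rw [inv_mul_cancel_right₀ hane]
          _ = q * b * a := by rw [h1]
      refine ⟨⟨(a, b), ha1, hb1, hab⟩, ?_⟩
      rw [hΘ]
      exact Prod.ext_iff.mpr ⟨Subtype.ext hfa, Subtype.ext hfb⟩
  constructor
  · obtain ⟨x, hx⟩ := Fq_nonempty q hq
    exact ⟨Θ ⟨x, hx⟩, hrange ▸ Set.mem_range_self _⟩
  · rw [← hrange]
    haveI : PreconnectedSpace ↥(Fq q) :=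
      Subtype.preconnectedSpace (isPreconnected_Fq q hq)
    obtain ⟨x, hx⟩ := Fq_nonempty q hq
    exact ⟨⟨Θ ⟨x, hx⟩, Set.mem_range_self _⟩, isPreconnected_range hΘcont⟩
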